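/- For the threshold graphon W on B^d with measure F_ν and threshold 0 < τ < 1, the function h ↦ F_ν({x ∈ B^d : d_W(x) ≥ h}) is continuous on (0, h*], where h* = F_ν(B^d \ τB^d). -/

import Mathlib

open MeasureTheory Real
open scoped RealInnerProductSpace

/-- The probability measure `F_ν` on the unit ball of `ℝ^d` with density
proportional to `(1 - ‖x‖²)^(ν - 1/2)` with respect to Lebesgue measure. -/
noncomputable def Fnu (d : ℕ) (ν : ℝ) : Measure (EuclideanSpace ℝ (Fin d)) :=
  letI base : Measure (EuclideanSpace ℝ (Fin d)) :=
    (volume.restrict (Metric.closedBall 0 1)).withDensity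
      (fun x => ENNReal.ofReal ((1 - ‖x‖ ^ 2) ^ (ν - 1 / 2)))
  (base Set.univ)⁻¹ • base

/-- The degree function of the threshold graphon `W(x,y) = 1_{⟨x,y⟩ ≥ τ}`
on the unit ball, with latent measure `F_ν`. -/
noncomputable def degW (d : ℕ) (ν τ : ℝ) (x : EuclideanSpace ℝ (Fin d)) : ℝ :=
  (Fnu d ν {y | τ ≤ ⟪x, y⟫}).toReal


noncomputable def fnuBase (d : ℕ) (ν : ℝ) : Measure (EuclideanSpace ℝ (Fin d)) :=
  (volume.restrict (Metric.closedBall 0 1)).withDensity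
    (fun x => ENNReal.ofReal ((1 - ‖x‖ ^ 2) ^ (ν - 1 / 2)))


lemma Fnu_def (d : ℕ) (ν : ℝ) : Fnu d ν = (fnuBase d ν Set.univ)⁻¹ • fnuBase d ν := rfl

lemma Fnu_apply (d : ℕ) (ν : ℝ) (s : Set (EuclideanSpace ℝ (Fin d))) :
    Fnu d ν s = (fnuBase d ν Set.univ)⁻¹ * fnuBase d ν s := rfl

instance (d : ℕ) (ν : ℝ) : SFinite (Fnu d ν) := by
  rw [Fnu_def]; infer_instance

lemma meas_density (d : ℕ) (ν : ℝ) :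
    Measurable (fun x : EuclideanSpace ℝ (Fin d) =>
      ENNReal.ofReal ((1 - ‖x‖ ^ 2) ^ (ν - 1 / 2))) :=
  ((measurable_const.sub (measurable_norm.pow_const 2)).pow measurable_const).ennreal_ofReal

lemma measurable_degW (d : ℕ) (ν τ : ℝ) : Measurable (degW d ν τ) := by
  have hs : MeasurableSet {p : (EuclideanSpace ℝ (Fin d)) × (EuclideanSpace ℝ (Fin d)) |
      τ ≤ ⟪p.1, p.2⟫} :=
    measurableSet_le measurable_const continuous_inner.measurable
  exact (measurable_measure_prodMk_left hs).ennreal_toReal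

lemma Fnu_null (d : ℕ) (ν : ℝ) {s : Set (EuclideanSpace ℝ (Fin d))} (hs : MeasurableSet s)
    (h0 : volume (s ∩ Metric.closedBall 0 1) = 0) : Fnu d ν s = 0 := by
  rw [Fnu_apply]
  have : fnuBase d ν s = 0 := by
    rw [fnuBase, withDensity_apply _ hs, Measure.restrict_restrict hs]
    exact setLIntegral_measure_zero _ _ h0
  rw [this, mul_zero]

variable {d : ℕ} {ν τ : ℝ}

lemma Fnu_preimage_isometry (O : EuclideanSpace ℝ (Fin d) ≃ₗᵢ[ℝ] EuclideanSpace ℝ (Fin d))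
    {s : Set (EuclideanSpace ℝ (Fin d))} (hs : MeasurableSet s) :
    Fnu d ν (O ⁻¹' s) = Fnu d ν s := by
  rw [Fnu_apply, Fnu_apply]
  congr 1
  have hpre : (O : EuclideanSpace ℝ (Fin d) → EuclideanSpace ℝ (Fin d)) ⁻¹' (Metric.closedBall 0 1)
      = Metric.closedBall 0 1 := by
    ext x
    simp [Metric.mem_closedBall, dist_eq_norm]
  have hmp : MeasurePreserving O (volume.restrict (Metric.closedBall 0 1))
      (volume.restrict (Metric.closedBall (0 : EuclideanSpace ℝ (Fin d)) 1)) := by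
    have := (O.measurePreserving).restrict_preimage
      (s := Metric.closedBall (0 : EuclideanSpace ℝ (Fin d)) 1) measurableSet_closedBall
    rwa [hpre] at this
  rw [fnuBase, withDensity_apply _ hs, withDensity_apply _ (hs.preimage O.continuous.measurable)]
  rw [← hmp.setLIntegral_comp_preimage hs (meas_density d ν)]
  refine setLIntegral_congr_fun (hs.preimage O.continuous.measurable) ?_
  intro x _
  simp [O.norm_map]

lemma measurableSet_inner_ge (x : EuclideanSpace ℝ (Fin d)) :
    MeasurableSet {y : EuclideanSpace ℝ (Fin d) | τ ≤ ⟪x, y⟫} :=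
  measurableSet_le measurable_const (Continuous.inner continuous_const continuous_id).measurable

lemma degW_congr {x x' : EuclideanSpace ℝ (Fin d)} (hx : ‖x‖ = ‖x'‖) :
    degW d ν τ x = degW d ν τ x' := by
  set O := Submodule.reflection (Submodule.span ℝ {x - x'})ᗮ with hO
  have hOx : O x = x' := Submodule.reflection_sub hx
  unfold degW
  congr 1
  have : {y : EuclideanSpace ℝ (Fin d) | τ ≤ ⟪x', y⟫}
      = O.symm ⁻¹' {y | τ ≤ ⟪x, y⟫} := by
    ext y
    simp only [Set.mem_setOf_eq, Set.mem_preimage]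
    rw [← hOx]
    constructor
    · intro h
      rwa [← O.apply_symm_apply y, O.inner_map_map] at h
    · intro h
      rw [← O.apply_symm_apply y, O.inner_map_map]
      exact h
  rw [this, Fnu_preimage_isometry O.symm (measurableSet_inner_ge x)]

lemma fnuBase_pos (hν : -1 / 2 < ν) {U : Set (EuclideanSpace ℝ (Fin d))} (hU : IsOpen U)
    {y0 : EuclideanSpace ℝ (Fin d)} (hy0U : y0 ∈ U) (hy0 : ‖y0‖ < 1) :
    0 < fnuBase d ν U := by
  obtain ⟨δ0, hδ0, hδ0U⟩ := Metric.isOpen_iff.mp hU y0 hy0U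
  set δ := min (δ0 / 2) ((1 - ‖y0‖) / 2) with hδ
  have hδpos : 0 < δ := lt_min (by linarith) (by linarith)
  have hballU : Metric.ball y0 δ ⊆ U :=
    (Metric.ball_subset_ball (lt_of_le_of_lt (min_le_left _ _) (by linarith)).le).trans hδ0U
  set ρ := ‖y0‖ + δ with hρ
  have hρ1 : ρ < 1 := by
    have : δ ≤ (1 - ‖y0‖) / 2 := min_le_right _ _
    simp only [hρ]; linarith
  have hρ0 : 0 ≤ ρ := by positivity
  have hnorm : ∀ y ∈ Metric.ball y0 δ, ‖y‖ ≤ ρ := by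
    intro y hy
    have := norm_sub_norm_le y y0
    rw [Metric.mem_ball, dist_eq_norm] at hy
    simp only [hρ]; linarith
  set a := 1 - ρ ^ 2 with ha
  have ha0 : 0 < a := by nlinarith
  set ε := min (a ^ (ν - 1 / 2)) 1 with hε
  have hε0 : 0 < ε := lt_min (Real.rpow_pos_of_pos ha0 _) one_pos
  have hlow : ∀ y ∈ Metric.ball y0 δ,
      ENNReal.ofReal ε ≤ ENNReal.ofReal ((1 - ‖y‖ ^ 2) ^ (ν - 1 / 2)) := by
    intro y hy
    apply ENNReal.ofReal_le_ofReal
    have h1 : a ≤ 1 - ‖y‖ ^ 2 := by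
      have h2 := hnorm y hy
      have h3 : ‖y‖ ^ 2 ≤ ρ ^ 2 := by nlinarith [norm_nonneg y]
      simp only [ha]; linarith
    have h4 : 1 - ‖y‖ ^ 2 ≤ 1 := by nlinarith [norm_nonneg y]
    rcases le_or_gt 0 (ν - 1 / 2) with he | he
    · exact le_trans (min_le_left _ _) (Real.rpow_le_rpow ha0.le h1 he)
    · exact le_trans (min_le_right _ _)
        (Real.one_le_rpow_of_pos_of_le_one_of_nonpos (by linarith) h4 he.le)
  have hball_cb : Metric.ball y0 δ ⊆ Metric.closedBall (0 : EuclideanSpace ℝ (Fin d)) 1 := by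
    intro y hy
    rw [Metric.mem_closedBall, dist_zero_right]
    exact (hnorm y hy).trans hρ1.le
  have key : ENNReal.ofReal ε * volume (Metric.ball y0 δ) ≤ fnuBase d ν U := by
    have h1 : fnuBase d ν (Metric.ball y0 δ) ≤ fnuBase d ν U := measure_mono hballU
    refine le_trans ?_ h1
    rw [fnuBase, withDensity_apply _ Metric.isOpen_ball.measurableSet]
    have h2 : ∫⁻ _ in Metric.ball y0 δ, (ENNReal.ofReal ε)
        ∂(volume.restrict (Metric.closedBall (0 : EuclideanSpace ℝ (Fin d)) 1))
        ≤ ∫⁻ y in Metric.ball y0 δ, ENNReal.ofReal ((1 - ‖y‖ ^ 2) ^ (ν - 1 / 2))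
        ∂(volume.restrict (Metric.closedBall (0 : EuclideanSpace ℝ (Fin d)) 1)) :=
      setLIntegral_mono (meas_density d ν) hlow
    refine le_trans ?_ h2
    rw [setLIntegral_const, Measure.restrict_apply Metric.isOpen_ball.measurableSet,
      Set.inter_eq_self_of_subset_left hball_cb]
  refine lt_of_lt_of_le ?_ key
  apply ENNReal.mul_pos
  · simp [hε0]
  · exact (Metric.measure_ball_pos volume y0 hδpos).ne'

lemma nontrivial_E (hd : 0 < d) : Nontrivial (EuclideanSpace ℝ (Fin d)) := by
  refine ⟨⟨0, EuclideanSpace.single ⟨0, hd⟩ 1, fun h => ?_⟩⟩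
  have := congrArg (fun f => f ⟨0, hd⟩) h
  simp [EuclideanSpace.single_apply] at this

lemma degW_zero (hd : 0 < d) (hτ0 : 0 < τ) {x : EuclideanSpace ℝ (Fin d)} (hx : ‖x‖ ≤ τ) :
    degW d ν τ x = 0 := by
  haveI := nontrivial_E hd
  unfold degW
  rw [Fnu_null d ν (measurableSet_inner_ge x) ?_, ENNReal.toReal_zero]
  refine measure_mono_null (fun y hy => ?_)
    (Measure.addHaar_sphere volume (0 : EuclideanSpace ℝ (Fin d)) 1)
  obtain ⟨h1, h2⟩ := hy
  rw [Metric.mem_closedBall, dist_zero_right] at h2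
  rw [Set.mem_setOf_eq] at h1
  have hcs : ⟪x, y⟫ ≤ ‖x‖ * ‖y‖ := real_inner_le_norm x y
  have : 1 ≤ ‖y‖ := by nlinarith [norm_nonneg x, norm_nonneg y]
  rw [Metric.mem_sphere, dist_zero_right]
  linarith

lemma degW_lt (hν : -1 / 2 < ν) (hτ0 : 0 < τ) (hfin : fnuBase d ν Set.univ ≠ ⊤)
    {x₁ x₂ : EuclideanSpace ℝ (Fin d)} (h1 : τ < ‖x₁‖) (h12 : ‖x₁‖ < ‖x₂‖) (h2 : ‖x₂‖ ≤ 1) :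
    degW d ν τ x₁ < degW d ν τ x₂ := by
  set r₁ := ‖x₁‖ with hr₁
  set r₂ := ‖x₂‖ with hr₂
  have hr₁0 : 0 < r₁ := lt_trans hτ0 h1
  have hr₂0 : 0 < r₂ := lt_trans hr₁0 h12
  set x₂' := (r₂ / r₁) • x₁ with hx₂'
  have hnorm : ‖x₂'‖ = r₂ := by
    rw [hx₂', norm_smul, Real.norm_eq_abs, abs_of_pos (by positivity), div_mul_cancel₀ _ hr₁0.ne']
  rw [degW_congr (x := x₂) (x' := x₂') hnorm.symm]
  -- sets
  set A₁ := {y : EuclideanSpace ℝ (Fin d) | τ ≤ ⟪x₁, y⟫} with hA₁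
  set A₂ := {y : EuclideanSpace ℝ (Fin d) | τ ≤ ⟪x₂', y⟫} with hA₂
  have hinner : ∀ y, ⟪x₂', y⟫ = (r₂ / r₁) * ⟪x₁, y⟫ := by
    intro y; rw [hx₂', real_inner_smul_left]
  set U := {y : EuclideanSpace ℝ (Fin d) | τ * r₁ / r₂ < ⟪x₁, y⟫ ∧ ⟪x₁, y⟫ < τ} ∩
      Metric.ball 0 1 with hU
  have hcont : Continuous fun y : EuclideanSpace ℝ (Fin d) => ⟪x₁, y⟫ :=
    Continuous.inner continuous_const continuous_id
  have hUopen : IsOpen U :=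
    (((isOpen_lt continuous_const hcont).inter (isOpen_lt hcont continuous_const))).inter
      Metric.isOpen_ball
  -- the witness point
  set m := (τ * r₁ / r₂ + τ) / 2 with hm
  have hmlt : τ * r₁ / r₂ < m ∧ m < τ := by
    constructor <;>
    · rw [hm]
      have : τ * r₁ / r₂ < τ := by
        rw [div_lt_iff₀ hr₂0]
        nlinarith
      linarith
  set y0 := (m / r₁ ^ 2) • x₁ with hy0
  have hy0U : y0 ∈ U := by
    constructor
    · have : ⟪x₁, y0⟫ = m := by
        rw [hy0, real_inner_smul_right, real_inner_self_eq_norm_sq, ← hr₁]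
        field_simp
      rw [Set.mem_setOf_eq, this]
      exact hmlt
    · rw [Metric.mem_ball, dist_zero_right, hy0, norm_smul, Real.norm_eq_abs,
        abs_of_pos (by positivity)]
      have : m / r₁ ^ 2 * r₁ = m / r₁ := by field_simp
      rw [this]
      rw [div_lt_one hr₁0]
      calc m < τ := hmlt.2
        _ < r₁ := h1
  have hy0n : ‖y0‖ < 1 := by
    have := hy0U.2
    rwa [Metric.mem_ball, dist_zero_right] at this
  -- A₁ ∪ U ⊆ A₂, disjoint
  have hsub1 : A₁ ⊆ A₂ := by
    intro y hy
    rw [hA₂, Set.mem_setOf_eq, hinner]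
    rw [hA₁, Set.mem_setOf_eq] at hy
    have h1' : (1:ℝ) ≤ r₂ / r₁ := (one_le_div hr₁0).mpr h12.le
    nlinarith
  have hsub2 : U ⊆ A₂ := by
    intro y hy
    rw [hA₂, Set.mem_setOf_eq, hinner]
    have hlt' := hy.1.1
    rw [div_lt_iff₀ hr₂0] at hlt'
    rw [← sub_nonneg]
    have h0' : 0 ≤ ⟪x₁, y⟫ * r₂ - τ * r₁ := by linarith
    calc (0:ℝ) ≤ (⟪x₁, y⟫ * r₂ - τ * r₁) / r₁ := by positivity
      _ = r₂ / r₁ * ⟪x₁, y⟫ - τ := by field_simp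
  have hdisj : Disjoint A₁ U := by
    rw [Set.disjoint_left]
    intro y hy hyU
    exact absurd hy (not_le.mpr hyU.1.2)
  -- measures
  have hμU : 0 < Fnu d ν U := by
    rw [Fnu_apply]
    exact ENNReal.mul_pos (by simp [ENNReal.inv_ne_zero, hfin]) (fnuBase_pos hν hUopen hy0U hy0n).ne'
  have hfinFnu : ∀ s, Fnu d ν s ≠ ⊤ := by
    intro s
    rw [Fnu_apply]
    rcases eq_or_ne (fnuBase d ν Set.univ) 0 with h0 | h0
    · have : fnuBase d ν s = 0 := le_antisymm (h0 ▸ measure_mono (Set.subset_univ s)) bot_le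
      simp [this]
    · exact ENNReal.mul_ne_top (by simp [h0]) (ne_top_of_le_ne_top hfin (measure_mono (Set.subset_univ s)))
  have hA1m : MeasurableSet A₁ := measurableSet_inner_ge x₁
  have hUm : MeasurableSet U := hUopen.measurableSet
  have hle : Fnu d ν A₁ + Fnu d ν U ≤ Fnu d ν A₂ := by
    rw [← measure_union hdisj hUm]
    exact measure_mono (Set.union_subset hsub1 hsub2)
  have hlt : Fnu d ν A₁ < Fnu d ν A₂ :=
    lt_of_lt_of_le (ENNReal.lt_add_right (hfinFnu A₁) hμU.ne') hle
  exact ENNReal.toReal_strict_mono (hfinFnu A₂) hlt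

lemma Fnu_degW_atom (hd : 0 < d) (hν : -1 / 2 < ν) (hτ0 : 0 < τ)
    (hfin : fnuBase d ν Set.univ ≠ ⊤) {h : ℝ} (hh : 0 < h) :
    Fnu d ν {x | degW d ν τ x = h} = 0 := by
  haveI := nontrivial_E hd
  have hmeas : MeasurableSet {x | degW d ν τ x = h} :=
    (measurable_degW d ν τ) (measurableSet_singleton h)
  refine Fnu_null d ν hmeas ?_
  set S := {x | degW d ν τ x = h} ∩ Metric.closedBall 0 1 with hS
  rcases Set.eq_empty_or_nonempty S with hSe | ⟨x0, hx0⟩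
  · simp [← hS, hSe]
  have key : ∀ x ∈ S, τ < ‖x‖ ∧ ‖x‖ ≤ 1 := by
    rintro x ⟨hx1, hx2⟩
    rw [Set.mem_setOf_eq] at hx1
    rw [Metric.mem_closedBall, dist_zero_right] at hx2
    refine ⟨?_, hx2⟩
    by_contra hle
    rw [degW_zero hd hτ0 (not_lt.mp hle)] at hx1
    exact hh.ne' hx1.symm
  have hsub : S ⊆ Metric.sphere 0 ‖x0‖ := by
    intro x hx
    obtain ⟨hxτ, hx1⟩ := key x hx
    obtain ⟨hx0τ, hx01⟩ := key x0 hx0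
    rw [Metric.mem_sphere, dist_zero_right]
    rcases lt_trichotomy ‖x‖ ‖x0‖ with hlt | heq | hgt
    · exact absurd (hx.1.trans hx0.1.symm)
        (ne_of_lt (degW_lt hν hτ0 hfin hxτ hlt hx01))
    · exact heq
    · exact absurd (hx0.1.trans hx.1.symm)
        (ne_of_lt (degW_lt hν hτ0 hfin hx0τ hgt hx1))
  exact measure_mono_null hsub (Measure.addHaar_sphere volume _ _)

/-- general continuity lemma for tail functions of finite measures -/
lemma contOn_tail {α : Type*} [MeasurableSpace α] (μ : Measure α) [IsFiniteMeasure μ]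
    {f : α → ℝ} (hf : Measurable f) (hatom : ∀ h : ℝ, 0 < h → μ {x | f x = h} = 0) :
    ContinuousOn (fun h : ℝ => (μ {x | h ≤ f x}).toReal) (Set.Ioi 0) := by
  intro h0 hh0
  rw [Set.mem_Ioi] at hh0
  apply ContinuousAt.continuousWithinAt
  set G : ℝ → ℝ := fun h => (μ {x | h ≤ f x}).toReal with hG
  have hne : ∀ h : ℝ, μ {x | h ≤ f x} ≠ ⊤ := fun h => measure_ne_top μ _
  have hanti : Antitone G := fun h1 h2 h12 =>
    ENNReal.toReal_mono (hne _) (measure_mono (fun x hx => le_trans h12 hx))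
  have hmeas : ∀ h : ℝ, MeasurableSet {x | h ≤ f x} :=
    fun h => measurableSet_le measurable_const hf
  have hmono : ∀ (k l : ℕ), k ≤ l → (1 : ℝ) / (l + 1) ≤ 1 / (k + 1) := by
    intro k l hkl
    apply one_div_le_one_div_of_le (by positivity)
    have : (k : ℝ) ≤ l := Nat.cast_le.mpr hkl
    linarith
  -- left sequence
  have hseq1 : Filter.Tendsto (fun k : ℕ => G (h0 - 1 / (k + 1))) Filter.atTop (nhds (G h0)) := by
    set s : ℕ → Set α := fun k => {x | h0 - 1 / ((k : ℝ) + 1) ≤ f x} with hs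
    have hI : ⋂ k : ℕ, s k = {x | h0 ≤ f x} := by
      ext x
      simp only [hs, Set.mem_iInter, Set.mem_setOf_eq]
      constructor
      · intro hk
        by_contra hlt
        push_neg at hlt
        obtain ⟨n, hn⟩ := exists_nat_one_div_lt (sub_pos.mpr hlt)
        have := hk n
        linarith
      · intro hx k
        have : (0:ℝ) < 1 / ((k : ℝ) + 1) := by positivity
        linarith
    have hanti_s : Antitone s := by
      intro k l hkl x hx
      simp only [hs, Set.mem_setOf_eq] at hx ⊢
      have := hmono k l hkl
      linarith
    have htd := tendsto_measure_iInter_atTop (μ := μ) (s := s)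
      (fun k => (hmeas (h0 - 1 / ((k : ℝ) + 1))).nullMeasurableSet) hanti_s ⟨0, hne _⟩
    rw [hI] at htd
    exact (ENNReal.tendsto_toReal (hne h0)).comp htd
  -- right sequence
  have hseq2 : Filter.Tendsto (fun k : ℕ => G (h0 + 1 / (k + 1))) Filter.atTop (nhds (G h0)) := by
    set s : ℕ → Set α := fun k => {x | h0 + 1 / ((k : ℝ) + 1) ≤ f x} with hs
    have hI : ⋃ k : ℕ, s k = {x | h0 < f x} := by
      ext x
      simp only [hs, Set.mem_iUnion, Set.mem_setOf_eq]
      constructor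
      · rintro ⟨k, hk⟩
        have : (0:ℝ) < 1 / ((k : ℝ) + 1) := by positivity
        linarith
      · intro hx
        obtain ⟨n, hn⟩ := exists_nat_one_div_lt (sub_pos.mpr hx)
        exact ⟨n, by linarith⟩
    have heqm : μ {x | h0 < f x} = μ {x | h0 ≤ f x} := by
      have hsub' : {x | h0 < f x} ⊆ {x | h0 ≤ f x} := fun x hx => (show h0 ≤ f x from le_of_lt hx)
      refine le_antisymm (measure_mono hsub') ?_
      calc μ {x | h0 ≤ f x} ≤ μ ({x | h0 < f x} ∪ {x | f x = h0}) := by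
            refine measure_mono fun x hx => ?_
            rcases lt_or_eq_of_le (show h0 ≤ f x from hx) with hc | hc
            · exact Or.inl hc
            · exact Or.inr hc.symm
        _ ≤ μ {x | h0 < f x} + μ {x | f x = h0} := measure_union_le _ _
        _ = μ {x | h0 < f x} := by rw [hatom h0 hh0, add_zero]
    have hmono_s : Monotone s := by
      intro k l hkl x hx
      simp only [hs, Set.mem_setOf_eq] at hx ⊢
      have := hmono k l hkl
      linarith
    have htd := tendsto_measure_iUnion_atTop (μ := μ) (s := s) hmono_s
    rw [hI, heqm] at htd
    exact (ENNReal.tendsto_toReal (hne h0)).comp htd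
  -- epsilon-delta
  rw [Metric.continuousAt_iff]
  intro ε hε
  have h1 := (Metric.tendsto_atTop.mp hseq1) (ε / 2) (by linarith)
  have h2 := (Metric.tendsto_atTop.mp hseq2) (ε / 2) (by linarith)
  obtain ⟨k1, hk1⟩ := h1
  obtain ⟨k2, hk2⟩ := h2
  set k := max k1 k2 with hk
  have ha := hk1 k (le_max_left _ _)
  have hb := hk2 k (le_max_right _ _)
  rw [Real.dist_eq] at ha hb
  refine ⟨1 / (k + 1), by positivity, ?_⟩
  intro h hdist
  rw [Real.dist_eq] at hdist ⊢
  have habs := abs_lt.mp hdist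
  have hl : h0 - 1 / (k + 1) ≤ h := by linarith [habs.1]
  have hr : h ≤ h0 + 1 / (k + 1) := by linarith [habs.2]
  have hup : G h ≤ G (h0 - 1 / (k + 1)) := hanti hl
  have hdn : G (h0 + 1 / (k + 1)) ≤ G h := hanti hr
  have ha' := abs_lt.mp ha
  have hb' := abs_lt.mp hb
  rw [abs_lt]
  constructor <;> [linarith [hb'.1]; linarith [ha'.2]]


/-- The regularized incomplete Beta function
`I(x; a, b) = (1/B(a,b)) ∫_0^x t^(a-1) (1-t)^(b-1) dt`. -/
noncomputable def regIncBeta (x a b : ℝ) : ℝ :=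
  (∫ t in (0 : ℝ)..x, t ^ (a - 1) * (1 - t) ^ (b - 1)) * Real.Gamma (a + b) /
    (Real.Gamma a * Real.Gamma b)

/-- For the threshold graphon on the unit ball with measure `F_ν` and `0 < τ < 1`,
the tail function `h ↦ F_ν({x : d_W(x) ≥ h})` is continuous on `(0, h*]`, where
`h* = F_ν(B^d \ τ B^d)`. -/
theorem tail_degW_continuousOn (d : ℕ) (hd : 0 < d) (ν τ : ℝ) (hν : -1 / 2 < ν)
    (hτ0 : 0 < τ) (hτ1 : τ < 1) :
    ContinuousOn (fun h : ℝ => (Fnu d ν {x | h ≤ degW d ν τ x}).toReal)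
      (Set.Ioc 0 ((Fnu d ν {x | τ < ‖x‖}).toReal)) := by
  by_cases hfin : fnuBase d ν Set.univ = ⊤
  · have hz : (fun h : ℝ => (Fnu d ν {x | h ≤ degW d ν τ x}).toReal) = fun _ => 0 := by
      funext h
      rw [Fnu_apply, hfin, ENNReal.inv_top, zero_mul, ENNReal.toReal_zero]
    rw [hz]
    exact continuousOn_const
  · haveI : IsFiniteMeasure (Fnu d ν) := by
      constructor
      rw [Fnu_apply]
      rcases eq_or_ne (fnuBase d ν Set.univ) 0 with h0 | h0
      · simp [h0]
      · rw [ENNReal.inv_mul_cancel h0 hfin]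
        exact ENNReal.one_lt_top
    exact (contOn_tail (Fnu d ν) (measurable_degW d ν τ)
      (fun h hh => Fnu_degW_atom hd hν hτ0 hfin hh)).mono Set.Ioc_subset_Ioi_self
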